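/- (Kronecker) Let α₁, …, α_M ∈ ℝ be such that α₁, …, α_M, 1 are linearly independent over ℤ (equivalently, over ℚ). Then for every θ₁, …, θ_M ∈ ℝ, the set of points { (frac(l·α₁ + θ₁), …, frac(l·α_M + θ_M)) : l ∈ ℝ } is dense in the unit cube [0,1]^M of ℝ^M. -/

import Mathlib

open Filter Topology

/-- Any closed additive subgroup of `ℝ^N` that is not discrete at `0` contains a full line. -/
lemma line_in_closed_subgroup {N : ℕ} (H : AddSubgroup (Fin N → ℝ))
    (hC : IsClosed (H : Set (Fin N → ℝ)))
    (hnd : ∀ ε : ℝ, 0 < ε → ∃ h ∈ H, h ≠ 0 ∧ ‖h‖ < ε) :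
    ∃ u : Fin N → ℝ, u ≠ 0 ∧ ∀ t : ℝ, t • u ∈ H := by
  have hseq : ∀ n : ℕ, ∃ h ∈ H, h ≠ 0 ∧ ‖h‖ < 1 / (n + 1) := fun n => hnd _ (by positivity)
  choose h hH hne hlt using hseq
  set u : ℕ → (Fin N → ℝ) := fun n => ‖h n‖⁻¹ • h n with hu
  have hnorm : ∀ n, ‖h n‖ ≠ 0 := fun n => norm_ne_zero_iff.2 (hne n)
  have hpos : ∀ n, 0 < ‖h n‖ := fun n => lt_of_le_of_ne (norm_nonneg _) (Ne.symm (hnorm n))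
  have husph : ∀ n, u n ∈ Metric.sphere (0 : Fin N → ℝ) 1 := by
    intro n
    simp [hu, norm_smul, abs_of_nonneg (inv_nonneg.2 (norm_nonneg _)),
      inv_mul_cancel₀ (hnorm n)]
  obtain ⟨v, hv, φ, hφ, hconv⟩ := (isCompact_sphere (0 : Fin N → ℝ) 1).tendsto_subseq husph
  refine ⟨v, ?_, ?_⟩
  · intro h0
    rw [h0] at hv
    simp at hv
  intro t
  set s : ℕ → ℝ := fun n => (⌊t / ‖h (φ n)‖⌋ : ℝ) * ‖h (φ n)‖ with hs
  have hnorm_to : Tendsto (fun n => ‖h (φ n)‖) atTop (𝓝 0) := by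
    refine squeeze_zero_norm (fun n => ?_) tendsto_one_div_add_atTop_nhds_zero_nat
    rw [Real.norm_eq_abs, abs_of_nonneg (norm_nonneg _)]
    calc ‖h (φ n)‖ ≤ 1 / (φ n + 1 : ℝ) := (hlt _).le
      _ ≤ 1 / (n + 1 : ℝ) := by
          have h2 : (n : ℝ) ≤ (φ n : ℝ) := by exact_mod_cast hφ.id_le n
          apply one_div_le_one_div_of_le (by positivity)
          linarith
  have hsto : Tendsto s atTop (𝓝 t) := by
    have hbound : ∀ n, ‖s n - t‖ ≤ ‖h (φ n)‖ := by
      intro n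
      have h1 : s n - t = -(Int.fract (t / ‖h (φ n)‖) * ‖h (φ n)‖) := by
        have h3 : (⌊t / ‖h (φ n)‖⌋ : ℝ) = t / ‖h (φ n)‖ - Int.fract (t / ‖h (φ n)‖) :=
          (Int.self_sub_fract _).symm
        simp only [hs, h3, sub_mul, div_mul_cancel₀ _ (hnorm (φ n))]
        ring
      rw [h1, norm_neg, Real.norm_eq_abs,
        abs_of_nonneg (mul_nonneg (Int.fract_nonneg _) (norm_nonneg _))]
      calc Int.fract (t / ‖h (φ n)‖) * ‖h (φ n)‖ ≤ 1 * ‖h (φ n)‖ :=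
            mul_le_mul_of_nonneg_right (Int.fract_lt_one _).le (norm_nonneg _)
        _ = ‖h (φ n)‖ := one_mul _
    have h4 := squeeze_zero_norm hbound hnorm_to
    have h5 : Tendsto (fun n => s n - t + t) atTop (𝓝 (0 + t)) := h4.add tendsto_const_nhds
    simpa using h5
  have hmem : ∀ n : ℕ, s n • (u ∘ φ) n ∈ H := by
    intro n
    have heq : s n • (u ∘ φ) n = (⌊t / ‖h (φ n)‖⌋ : ℤ) • h (φ n) := by
      simp only [hu, Function.comp_apply, smul_smul, ← Int.cast_smul_eq_zsmul ℝ]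
      congr 1
      simp only [hs]
      rw [mul_assoc, mul_inv_cancel₀ (hnorm (φ n)), mul_one]
    rw [heq]
    exact zsmul_mem (hH _) _
  have hlim : Tendsto (fun n => s n • (u ∘ φ) n) atTop (𝓝 (t • v)) := hsto.smul hconv
  exact hC.mem_of_tendsto hlim (Eventually.of_forall hmem)

lemma full_of_closed (N : ℕ) : ∀ (H : AddSubgroup (Fin N → ℝ)),
    IsClosed (H : Set (Fin N → ℝ)) →
    (∀ m : Fin N → ℤ, (fun i => (m i : ℝ)) ∈ H) →
    (∀ f : Fin N → ℝ, (∀ h ∈ H, ∃ k : ℤ, ∑ i, f i * h i = (k : ℝ)) → f = 0) →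
    ∀ y : Fin N → ℝ, y ∈ H := by
  induction N with
  | zero =>
      intro H _ _ _ y
      have : y = 0 := Subsingleton.elim _ _
      rw [this]; exact H.zero_mem
  | succ N ih =>
      intro H hC hZ hstar y
      by_cases hd : ∃ ε : ℝ, 0 < ε ∧ ∀ h ∈ H, ‖h‖ < ε → h = 0
      · -- discrete case : contradiction
        exfalso
        obtain ⟨ε, hε, hiso⟩ := hd
        set F : Set (Fin (N + 1) → ℝ) := (H : Set _) ∩ Set.Icc 0 1 with hFdef
        have hFfin : F.Finite := by
          by_contra hinf
          have hinf' : F.Infinite := hinf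
          obtain ⟨x, -, hacc⟩ :=
            hinf'.exists_accPt_cofinite_inf_principal_of_subset_isCompact
              (isCompact_Icc (a := (0 : Fin (N+1) → ℝ)) (b := 1)) Set.inter_subset_right
          have hacc' : AccPt x (𝓟 F) := hacc.mono inf_le_right
          rw [accPt_iff_nhds] at hacc'
          obtain ⟨p, ⟨hpb, hpF⟩, hpx⟩ :=
            hacc' (Metric.ball x (ε / 2)) (Metric.ball_mem_nhds _ (by positivity))
          have hdpx : 0 < dist p x := dist_pos.2 hpx
          obtain ⟨q, ⟨hqb, hqF⟩, hqx⟩ :=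
            hacc' (Metric.ball x (min (ε / 2) (dist p x)))
              (Metric.ball_mem_nhds _ (lt_min (by positivity) hdpx))
          rw [Metric.mem_ball] at hpb hqb
          have hpq : p ≠ q := by
            intro h; subst h
            exact absurd (lt_min_iff.1 hqb).2 (lt_irrefl _)
          have hsub : p - q ∈ H := H.sub_mem hpF.1 hqF.1
          have hsmall : ‖p - q‖ < ε := by
            have : dist p q < ε := by
              calc dist p q ≤ dist p x + dist q x := dist_triangle_right _ _ _
                _ < ε / 2 + ε / 2 := add_lt_add hpb (lt_of_lt_of_le hqb (min_le_left _ _))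
                _ = ε := by ring
            rwa [dist_eq_norm] at this
          exact hpq (sub_eq_zero.1 (hiso _ hsub hsmall))
        set c : ℕ := hFfin.toFinset.card with hc
        set d : ℕ := c.factorial with hdd
        have hd0 : (d : ℝ) ≠ 0 := Nat.cast_ne_zero.2 (Nat.factorial_ne_zero c)
        -- key : d • h is an integer vector for every h ∈ H
        have key : ∀ h ∈ H, ∀ i, ∃ k : ℤ, (d : ℝ) * h i = (k : ℝ) := by
          intro h hh
          set g : ℕ → (Fin (N + 1) → ℝ) := fun n i => Int.fract ((n : ℝ) * h i) with hg
          have hgF : ∀ n : ℕ, g n ∈ hFfin.toFinset := by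
            intro n
            rw [Set.Finite.mem_toFinset]
            constructor
            · have hrep : g n = (fun i => (n : ℝ) * h i) -
                  (fun i => ((⌊(n : ℝ) * h i⌋ : ℤ) : ℝ)) := by
                funext i
                simp only [hg, Pi.sub_apply]
                rw [Int.fract]
              rw [hrep]
              refine H.sub_mem ?_ (hZ _)
              have : (fun i => (n : ℝ) * h i) = (n : ℝ) • h := by
                funext i; simp
              rw [this, Nat.cast_smul_eq_nsmul ℝ]
              exact nsmul_mem hh n
            · constructor
              · intro i; exact Int.fract_nonneg _
              · intro i; exact (Int.fract_lt_one _).le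
          have hmain : ∃ a b : ℕ, a < b ∧ b ≤ c ∧ g a = g b := by
            obtain ⟨a, ha, b, hb, hab, hgab⟩ :=
              Finset.exists_ne_map_eq_of_card_lt_of_maps_to
                (s := Finset.range (c + 1)) (t := hFfin.toFinset)
                (by simp [hc]) (fun n _ => hgF n)
            rw [Finset.mem_range] at ha hb
            rcases Ne.lt_or_gt hab with hlt | hlt
            · exact ⟨a, b, hlt, by omega, hgab⟩
            · exact ⟨b, a, hlt, by omega, hgab.symm⟩
          obtain ⟨a, b, hab, hbc, hgab⟩ := hmain
          intro i
          have hfr : Int.fract ((a : ℝ) * h i) = Int.fract ((b : ℝ) * h i) := by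
            have := congrFun hgab i
            simpa [hg] using this
          obtain ⟨z, hz⟩ := Int.fract_eq_fract.1 hfr
          set cc : ℕ := b - a with hcc
          have hcc1 : 0 < cc := by omega
          have hccle : cc ≤ c := by omega
          obtain ⟨e, he⟩ := Nat.dvd_factorial hcc1 hccle
          have hccr : (cc : ℝ) * h i = ((-z : ℤ) : ℝ) := by
            have hba : (cc : ℝ) = (b : ℝ) - (a : ℝ) := by
              rw [hcc]; push_cast [Nat.cast_sub hab.le]; ring
            rw [hba]
            push_cast
            nlinarith [hz]
          refine ⟨(e : ℤ) * (-z), ?_⟩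
          have hde : (d : ℝ) = (cc : ℝ) * (e : ℝ) := by
            rw [hdd, he]; push_cast; ring
          rw [hde]
          push_cast
          rw [mul_comm ((cc:ℝ)) ((e:ℝ)), mul_assoc, hccr]
          push_cast
          ring
        -- build the annihilating functional
        set f : Fin (N + 1) → ℝ := fun i => if (0 : Fin (N + 1)) = i then (d : ℝ) else 0 with hf
        have hfall : ∀ h ∈ H, ∃ k : ℤ, ∑ i, f i * h i = (k : ℝ) := by
          intro h hh
          obtain ⟨k, hk⟩ := key h hh 0
          refine ⟨k, ?_⟩
          rw [hf]
          simp only [ite_mul, zero_mul]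
          rw [Finset.sum_ite_eq]
          simpa using hk
        have hf0 := hstar f hfall
        have : (d : ℝ) = 0 := by
          have := congrFun hf0 0
          simpa [hf] using this
        exact hd0 this
      · -- nondiscrete case
        push_neg at hd
        have hnd : ∀ ε : ℝ, 0 < ε → ∃ h ∈ H, h ≠ 0 ∧ ‖h‖ < ε := by
          intro ε hε
          obtain ⟨h, hh, h1, h2⟩ := hd ε hε
          exact ⟨h, hh, h2, h1⟩
        obtain ⟨u, hu0, huH⟩ := line_in_closed_subgroup H hC hnd
        obtain ⟨j, hj⟩ := Function.ne_iff.1 hu0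
        have hj : u j ≠ 0 := by simpa using hj
        -- the embedding of the hyperplane
        set emb : (Fin N → ℝ) → (Fin (N + 1) → ℝ) := fun x => Fin.insertNth j (0 : ℝ) x with hemb
        have embAdd : ∀ x z : Fin N → ℝ, emb (x + z) = emb x + emb z := by
          intro x z
          funext i
          refine Fin.succAboveCases j ?_ ?_ i <;> simp [hemb]
        have hcont : Continuous emb := by
          apply continuous_pi
          intro i
          refine Fin.succAboveCases j ?_ ?_ i
          · simpa [hemb] using continuous_const
          · intro k
            simpa [hemb] using continuous_apply k
        set embH : (Fin N → ℝ) →+ (Fin (N + 1) → ℝ) := AddMonoidHom.mk' emb embAdd with hembH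
        set H' : AddSubgroup (Fin N → ℝ) := H.comap embH with hH'
        have hC' : IsClosed (H' : Set (Fin N → ℝ)) := hC.preimage hcont
        have hZ' : ∀ m : Fin N → ℤ, (fun i => (m i : ℝ)) ∈ H' := by
          intro m
          have : emb (fun i => (m i : ℝ)) =
              fun i => (((Fin.insertNth j (0 : ℤ) m : Fin (N + 1) → ℤ) i : ℤ) : ℝ) := by
            funext i
            refine Fin.succAboveCases j ?_ ?_ i <;> simp [hemb]
          show emb (fun i => (m i : ℝ)) ∈ H
          rw [this]
          exact hZ _
        -- the projection along u
        set A : (Fin (N + 1) → ℝ) → (Fin (N + 1) → ℝ) := fun z => z - (z j / u j) • u with hA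
        have hAapp : ∀ z k, A z k = z k - z j / u j * u k := by
          intro z k; simp [hA]
        have hAH : ∀ z ∈ H, A z ∈ H := fun z hz => H.sub_mem hz (huH _)
        have hAj : ∀ z, A z j = 0 := by
          intro z; rw [hAapp]; field_simp; ring
        have hembA : ∀ z : Fin (N + 1) → ℝ, emb (fun i => A z (j.succAbove i)) = A z := by
          intro z
          funext i
          refine Fin.succAboveCases j ?_ ?_ i
          · rw [hemb]; simp [hAj z]
          · intro k; rw [hemb]; simp
        have hstar' : ∀ g : Fin N → ℝ,
            (∀ x ∈ H', ∃ k : ℤ, ∑ i, g i * x i = (k : ℝ)) → g = 0 := by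
          intro g hg
          set L : (Fin (N + 1) → ℝ) →ₗ[ℝ] ℝ := {
            toFun := fun z => ∑ i, g i * (z (j.succAbove i) - z j / u j * u (j.succAbove i))
            map_add' := by
              intro x z
              rw [← Finset.sum_add_distrib]
              refine Finset.sum_congr rfl fun i _ => ?_
              simp only [Pi.add_apply]
              ring
            map_smul' := by
              intro r x
              simp only [Pi.smul_apply, smul_eq_mul, RingHom.id_apply]
              rw [Finset.mul_sum]
              refine Finset.sum_congr rfl fun i _ => ?_
              ring } with hL
          have hLA : ∀ z, L z = ∑ i, g i * A z (j.succAbove i) := by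
            intro z
            have hLz : L z = ∑ i, g i * (z (j.succAbove i) - z j / u j * u (j.succAbove i)) := rfl
            rw [hLz]
            refine Finset.sum_congr rfl fun i _ => ?_
            rw [hAapp]
          set f : Fin (N + 1) → ℝ := fun k => L (fun i' => if k = i' then 1 else 0) with hfd
          have hLsum : ∀ z, L z = ∑ k, f k * z k := by
            intro z
            rw [L.pi_apply_eq_sum_univ z]
            refine Finset.sum_congr rfl fun k _ => ?_
            rw [smul_eq_mul, mul_comm]
          have hfint : ∀ h ∈ H, ∃ k : ℤ, ∑ i, f i * h i = (k : ℝ) := by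
            intro h hh
            have h1 : (fun i => A h (j.succAbove i)) ∈ H' := by
              show emb (fun i => A h (j.succAbove i)) ∈ H
              rw [hembA]
              exact hAH h hh
            obtain ⟨k, hk⟩ := hg _ h1
            exact ⟨k, by rw [← hLsum, hLA]; exact hk⟩
          have hf0 := hstar f hfint
          -- now evaluate L on emb x
          have hgx : ∀ x : Fin N → ℝ, ∑ i, g i * x i = 0 := by
            intro x
            have h1 : ∀ i, A (emb x) (j.succAbove i) = x i := by
              intro i
              rw [hAapp]
              have e1 : emb x j = 0 := by rw [hemb]; simp
              have e2 : emb x (j.succAbove i) = x i := by rw [hemb]; simp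
              rw [e1, e2]
              simp
            have h2 : L (emb x) = ∑ i, g i * x i := by
              rw [hLA]
              exact Finset.sum_congr rfl fun i _ => by rw [h1]
            have h3 : L (emb x) = 0 := by
              rw [hLsum, hf0]
              simp
            rw [← h2, h3]
          funext i
          have := hgx g
          have hz := (Finset.sum_eq_zero_iff_of_nonneg
            (fun i _ => mul_self_nonneg (g i))).1 this i (Finset.mem_univ i)
          simpa using mul_self_eq_zero.1 hz
        have hall := ih H' hC' hZ' hstar'
        have h1 : (fun i => A y (j.succAbove i)) ∈ H' := hall _
        have h2 : A y ∈ H := by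
          rw [← hembA y]
          exact h1
        have h3 : y = A y + (y j / u j) • u := by
          rw [hA]; simp
        rw [h3]
        exact H.add_mem h2 (huH _)

/-- Kronecker: if α₁, …, α_M, 1 are linearly independent over ℤ, then for
every θ₁, …, θ_M the set {(frac(l·α₁+θ₁), …, frac(l·α_M+θ_M)) : l ∈ ℝ} is dense in the
unit cube [0,1]^M. -/
theorem stmt3 (M : ℕ) (α : Fin M → ℝ)
    (hindep : ∀ (k : Fin M → ℤ) (k₀ : ℤ),
      (∑ i, (k i : ℝ) * α i) + (k₀ : ℝ) = 0 → (∀ i, k i = 0) ∧ k₀ = 0)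
    (θ : Fin M → ℝ) :
    Set.Icc (0 : Fin M → ℝ) 1 ⊆
      closure {x : Fin M → ℝ | ∃ l : ℝ, x = fun i => Int.fract (l * α i + θ i)} := by
  -- the subgroup generated by the line ℝα and ℤ^M
  set G : AddSubgroup (Fin M → ℝ) := {
    carrier := {x | ∃ t : ℝ, ∃ m : Fin M → ℤ, x = t • α + fun i => (m i : ℝ)}
    zero_mem' := ⟨0, 0, by funext i; simp⟩
    add_mem' := by
      rintro x y ⟨t, m, rfl⟩ ⟨s, n, rfl⟩
      refine ⟨t + s, m + n, ?_⟩
      funext i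
      simp
      ring
    neg_mem' := by
      rintro x ⟨t, m, rfl⟩
      refine ⟨-t, -m, ?_⟩
      funext i
      simp
      ring } with hG
  set H : AddSubgroup (Fin M → ℝ) := G.topologicalClosure with hH
  have hGH : ∀ x, x ∈ G → x ∈ H := fun x hx => G.le_topologicalClosure hx
  have hC : IsClosed (H : Set (Fin M → ℝ)) := G.isClosed_topologicalClosure
  have hZ : ∀ m : Fin M → ℤ, (fun i => (m i : ℝ)) ∈ H := by
    intro m
    exact hGH _ ⟨0, m, by funext i; simp⟩
  have hline : ∀ t : ℝ, t • α ∈ H := by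
    intro t
    exact hGH _ ⟨t, 0, by funext i; simp⟩
  have hstar : ∀ f : Fin M → ℝ, (∀ h ∈ H, ∃ k : ℤ, ∑ i, f i * h i = (k : ℝ)) → f = 0 := by
    intro f hf
    -- f is an integer vector
    have hfint : ∀ i, ∃ k : ℤ, f i = (k : ℝ) := by
      intro i
      obtain ⟨k, hk⟩ := hf _ (hZ (fun i' => if i = i' then 1 else 0))
      refine ⟨k, ?_⟩
      rw [← hk]
      simp [mul_ite]
    -- f ⬝ α = 0
    have hfα : ∑ i, f i * α i = 0 := by
      by_contra hne
      set S : ℝ := ∑ i, f i * α i with hS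
      set cc : ℝ := 1 / (2 * S) with hcc
      obtain ⟨k, hk⟩ := hf _ (hline cc)
      have hsum : ∑ i, f i * (cc • α) i = cc * S := by
        rw [hS, Finset.mul_sum]
        refine Finset.sum_congr rfl fun i _ => ?_
        rw [Pi.smul_apply, smul_eq_mul]
        ring
      have hhalf : (k : ℝ) = 1 / 2 := by
        rw [← hk, hsum, hcc]
        field_simp
      have h2k : (2 * k : ℤ) = 1 := by
        have : ((2 * k : ℤ) : ℝ) = ((1 : ℤ) : ℝ) := by push_cast; linarith
        exact_mod_cast this
      omega
    choose k hk using hfint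
    have h0 : (∑ i, (k i : ℝ) * α i) + ((0 : ℤ) : ℝ) = 0 := by
      simp only [Int.cast_zero, add_zero]
      rw [← hfα]
      exact Finset.sum_congr rfl fun i _ => by rw [hk]
    obtain ⟨hk0, -⟩ := hindep k 0 h0
    funext i
    rw [hk i, hk0 i]
    simp
  have hfull := full_of_closed M H hC hZ hstar
  -- now the ε-argument
  intro x hx
  rw [Metric.mem_closure_iff]
  intro ε hε
  set δ : ℝ := min ε 1 / 4 with hδ
  have hmin : (0 : ℝ) < min ε 1 := lt_min hε one_pos
  have hδ0 : 0 < δ := by rw [hδ]; linarith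
  have hδ14 : δ ≤ 1 / 4 := by
    have := min_le_right ε 1
    rw [hδ]; linarith
  have hδε : 3 * δ < ε := by
    have h1 : min ε 1 ≤ ε := min_le_left _ _
    rw [hδ]; linarith
  have hx0 : ∀ i, 0 ≤ x i := fun i => by simpa using hx.1 i
  have hx1 : ∀ i, x i ≤ 1 := fun i => by simpa using hx.2 i
  set y : Fin M → ℝ := fun i => min (max (x i) (2 * δ)) (1 - 2 * δ) with hy
  have hylb : ∀ i, 2 * δ ≤ y i := by
    intro i
    rw [hy]
    exact le_min (le_max_right _ _) (by linarith)
  have hyub : ∀ i, y i ≤ 1 - 2 * δ := fun i => min_le_right _ _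
  have hyx : ∀ i, |y i - x i| ≤ 2 * δ := by
    intro i
    have hyi : y i = min (max (x i) (2 * δ)) (1 - 2 * δ) := rfl
    rw [hyi, abs_le]
    rcases max_cases (x i) (2 * δ) with ⟨h1, h2⟩ | ⟨h1, h2⟩ <;>
      rcases min_cases (max (x i) (2 * δ)) (1 - 2 * δ) with ⟨h3, h4⟩ | ⟨h3, h4⟩ <;>
      rw [h3] <;> constructor <;>
      first
        | (rw [h1]; linarith [hx0 i, hx1 i])
        | linarith [hx0 i, hx1 i]
  -- get an element of G close to y - θ
  have hyθ : (fun i => y i - θ i) ∈ closure (G : Set (Fin M → ℝ)) := by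
    rw [← AddSubgroup.topologicalClosure_coe]
    exact hfull _
  obtain ⟨g, hgG, hgd⟩ := Metric.mem_closure_iff.1 hyθ δ hδ0
  obtain ⟨t, m, rfl⟩ := hgG
  have hcoord : ∀ i, |y i - θ i - (t * α i + (m i : ℝ))| < δ := by
    intro i
    have := (dist_pi_lt_iff hδ0).1 hgd i
    rw [Real.dist_eq] at this
    simpa [Pi.smul_apply, smul_eq_mul] using this
  refine ⟨fun i => Int.fract (t * α i + θ i), ⟨t, rfl⟩, ?_⟩
  rw [dist_pi_lt_iff hε]
  intro i
  rw [Real.dist_eq]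
  have hwm : 0 ≤ t * α i + θ i + (m i : ℝ) ∧ t * α i + θ i + (m i : ℝ) < 1 := by
    have h1 := hcoord i
    rw [abs_lt] at h1
    constructor <;> [linarith [hylb i, hδ0]; linarith [hyub i, hδ0]]
  have hfract : Int.fract (t * α i + θ i) = t * α i + θ i + (m i : ℝ) := by
    rw [← Int.fract_add_intCast (t * α i + θ i) (m i)]
    exact Int.fract_eq_self.2 ⟨hwm.1, hwm.2⟩
  rw [hfract]
  have h1 := hcoord i
  rw [abs_lt] at h1
  have h2 := hyx i
  rw [abs_le] at h2
  rw [abs_lt]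
  constructor <;> linarith
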